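/- arXiv:2004.02075 — 2 statements merged into one kernel-verified Lean document; each statement's English description precedes it below -/
import Mathlib

section
/- Let (R, m) be a complete unramified regular local ring of mixed characteristic and (S, n) its Eisenstein extension S = R[X]/(f(X)) by an Eisenstein polynomial f(X). Let p and p' be prime ideals of R with rad(p + p') = m, and let q and q' be prime ideals of S lying over p and p' respectively (i.e., containing pS and p'S). Then rad(q + q') = n. In particular, if the Huneke–Lyubeznik graph of the minimal primes of an ideal J of R is disconnected, then so is the Huneke–Lyubeznik graph of the minimal primes of JS. -/
open IsLocalRing Polynomial

universe u

/-- A Noetherian local ring is *regular* if its maximal ideal can be generated by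
`dim R` many elements. -/
def IsRegularLocal (R : Type u) [CommRing R] [IsLocalRing R] : Prop :=
  IsNoetherianRing R ∧ ∃ s : Finset R, Ideal.span (s : Set R) = maximalIdeal R ∧
    (s.card : WithBot ℕ∞) = ringKrullDim R

/-- The Huneke–Lyubeznik graph of an ideal `J` of a local ring `A`: vertices are the
minimal primes of `J`, and two distinct minimal primes `p`, `q` are adjacent iff
`p + q` is not primary for the maximal ideal (i.e. `rad (p + q) ≠ m`). -/
def hlGraph (A : Type u) [CommRing A] [IsLocalRing A] (J : Ideal A) :
    SimpleGraph ↥J.minimalPrimes :=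
  SimpleGraph.fromRel fun P Q => (P.1 + Q.1).radical ≠ maximalIdeal A

/-- if `rad (p + p') = m` in `R` and `q ⊇ pS`, `q' ⊇ p'S` are primes of
the Eisenstein extension `S = R[X]/(f)`, then `rad (q + q') = n`; in particular, if the
Huneke–Lyubeznik graph of the minimal primes of `J` is disconnected, so is the
Huneke–Lyubeznik graph of the minimal primes of `JS`. -/
theorem stmt_7 (R : Type u) [CommRing R] [IsLocalRing R] [IsNoetherianRing R]
    [IsAdicComplete (maximalIdeal R) R]
    (p : ℕ) (hp : p.Prime) [CharZero R] (hres : CharP (ResidueField R) p)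
    (hunram : (p : R) ∉ (maximalIdeal R) ^ 2)
    (hreg : IsRegularLocal R)
    (f : Polynomial R) (hmonic : f.Monic) (hdeg : 0 < f.natDegree)
    (hEis : f.IsEisensteinAt (maximalIdeal R))
    [IsLocalRing (AdjoinRoot f)] :
    (∀ P P' : Ideal R, P.IsPrime → P'.IsPrime →
        (P + P').radical = maximalIdeal R →
        ∀ q q' : Ideal (AdjoinRoot f), q.IsPrime → q'.IsPrime →
          P.map (algebraMap R (AdjoinRoot f)) ≤ q →
          P'.map (algebraMap R (AdjoinRoot f)) ≤ q' →
          (q + q').radical = maximalIdeal (AdjoinRoot f)) ∧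
      ∀ J : Ideal R, ¬ (hlGraph R J).Connected →
        ¬ (hlGraph (AdjoinRoot f) (J.map (algebraMap R (AdjoinRoot f)))).Connected := by
  classical
  set S := AdjoinRoot f with hS
  set φ := algebraMap R (AdjoinRoot f) with hφ
  haveI hfin : Module.Finite R (AdjoinRoot f) := (AdjoinRoot.powerBasis' hmonic).finite
  haveI hint : Algebra.IsIntegral R (AdjoinRoot f) := Algebra.IsIntegral.of_finite R _
  -- injectivity of the structure map
  have hinj : Function.Injective φ := by
    intro a b hab
    let pb := AdjoinRoot.powerBasis' hmonic
    let i0 : Fin pb.dim := ⟨0, hdeg⟩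
    have h1 : (a - b) • pb.basis i0 = 0 := by
      rw [pb.basis_eq_pow i0]
      have : pb.gen ^ (i0 : ℕ) = 1 := pow_zero _
      rw [this, Algebra.smul_def, mul_one, map_sub, hab, sub_self]
    have h2 := congrArg (pb.basis.repr) h1
    rw [map_smul, map_zero, Module.Basis.repr_self] at h2
    have h3 := congrArg (fun g => g i0) h2
    simp [Finsupp.smul_single] at h3
    exact sub_eq_zero.mp h3
  -- comap of maximal ideal is maximal
  have hcomap : (maximalIdeal (AdjoinRoot f)).comap φ = maximalIdeal R :=
    IsLocalRing.eq_maximalIdeal (Ideal.isMaximal_comap_of_isIntegral_of_isMaximal _)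
  have hmap_m : (maximalIdeal R).map φ ≤ maximalIdeal (AdjoinRoot f) := by
    rw [Ideal.map_le_iff_le_comap, hcomap]
  -- root ^ natDegree ∈ m S
  have hrootpow : (AdjoinRoot.root f) ^ f.natDegree ∈ (maximalIdeal R).map φ := by
    have h0 : aeval (AdjoinRoot.root f) f = 0 := by
      rw [AdjoinRoot.aeval_eq, AdjoinRoot.mk_self]
    exact hEis.isWeaklyEisensteinAt.pow_natDegree_le_of_aeval_zero_of_monic_mem_map h0 hmonic
      f.natDegree natDegree_map_le
  have hrootmem : AdjoinRoot.root f ∈ maximalIdeal (AdjoinRoot f) :=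
    (maximalIdeal.isMaximal _).isPrime.mem_of_pow_mem _ (hmap_m hrootpow)
  -- PART 1
  have key : ∀ P P' : Ideal R, P.IsPrime → P'.IsPrime →
      (P + P').radical = maximalIdeal R →
      ∀ q q' : Ideal (AdjoinRoot f), q.IsPrime → q'.IsPrime →
        P.map φ ≤ q → P'.map φ ≤ q' →
        (q + q').radical = maximalIdeal (AdjoinRoot f) := by
    intro P P' hP hP' hrad q q' hq hq' hq1 hq2
    have hsum : q + q' ≤ maximalIdeal (AdjoinRoot f) :=
      sup_le (le_maximalIdeal hq.ne_top) (le_maximalIdeal hq'.ne_top)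
    have hle : (q + q').radical ≤ maximalIdeal (AdjoinRoot f) :=
      le_trans (Ideal.radical_mono hsum) (maximalIdeal.isMaximal _).isPrime.radical.le
    refine le_antisymm hle ?_
    have hm : (maximalIdeal R).map φ ≤ (q + q').radical := by
      rw [← hrad]
      refine le_trans (Ideal.map_radical_le φ) (Ideal.radical_mono ?_)
      simp only [Ideal.add_eq_sup, Ideal.map_sup]
      exact sup_le (hq1.trans le_sup_left) (hq2.trans le_sup_right)
    have hrt : AdjoinRoot.root f ∈ (q + q').radical := by
      rw [← Ideal.radical_idem (q + q')]
      exact Ideal.mem_radical_iff.mpr ⟨f.natDegree, hm hrootpow⟩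
    intro s hs
    obtain ⟨g, rfl⟩ := AdjoinRoot.mk_surjective s
    have hrepr : AdjoinRoot.mk f g
        = AdjoinRoot.root f * AdjoinRoot.mk f g.divX + φ (g.coeff 0) := by
      conv_lhs => rw [← X_mul_divX_add g]
      rw [map_add, map_mul, AdjoinRoot.mk_X, AdjoinRoot.mk_C]
      rfl
    have hc0 : g.coeff 0 ∈ maximalIdeal R := by
      rw [← hcomap]
      have : φ (g.coeff 0) ∈ maximalIdeal (AdjoinRoot f) := by
        have : φ (g.coeff 0) = AdjoinRoot.mk f g - AdjoinRoot.root f * AdjoinRoot.mk f g.divX := by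
          rw [hrepr]; ring
        rw [this]
        exact Ideal.sub_mem _ hs (Ideal.mul_mem_right _ _ hrootmem)
      exact this
    rw [hrepr]
    exact Ideal.add_mem _ (Ideal.mul_mem_right _ _ hrt)
      (hm (Ideal.mem_map_of_mem φ hc0))
  refine ⟨key, ?_⟩
  -- PART 2
  intro J hdis hcon
  apply hdis
  set JS := J.map φ with hJS
  -- choose a minimal prime of J below the contraction of each minimal prime of JS
  have hchoice : ∀ q : JS.minimalPrimes, ∃ P ∈ J.minimalPrimes, P ≤ q.1.comap φ := by
    intro q
    haveI : q.1.IsPrime := q.2.1.1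
    exact Ideal.exists_minimalPrimes_le (Ideal.map_le_iff_le_comap.mp q.2.1.2)
  choose c hc1 hc2 using hchoice
  have hedge : ∀ q q' : JS.minimalPrimes, (hlGraph _ JS).Adj q q' →
      (hlGraph R J).Reachable ⟨c q, hc1 q⟩ ⟨c q', hc1 q'⟩ := by
    intro q q' hadj
    rw [hlGraph, SimpleGraph.fromRel_adj] at hadj
    obtain ⟨hne, h⟩ := hadj
    have hnotm : (c q + c q').radical ≠ maximalIdeal R := by
      intro hm
      have hk := key (c q) (c q') (hc1 q).1.1 (hc1 q').1.1 hm q.1 q'.1 q.2.1.1 q'.2.1.1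
        (Ideal.map_le_iff_le_comap.mpr (hc2 q)) (Ideal.map_le_iff_le_comap.mpr (hc2 q'))
      rcases h with h | h
      · exact h hk
      · exact h (by rwa [add_comm])
    by_cases heq : (⟨c q, hc1 q⟩ : J.minimalPrimes) = ⟨c q', hc1 q'⟩
    · exact heq ▸ SimpleGraph.Reachable.refl _
    · refine SimpleGraph.Adj.reachable ?_
      rw [hlGraph, SimpleGraph.fromRel_adj]
      exact ⟨heq, Or.inl hnotm⟩
  have hreach : ∀ q q' : JS.minimalPrimes, (hlGraph _ JS).Reachable q q' →
      (hlGraph R J).Reachable ⟨c q, hc1 q⟩ ⟨c q', hc1 q'⟩ := by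
    intro q q' ⟨w⟩
    induction w with
    | nil => exact SimpleGraph.Reachable.refl _
    | cons hadj w ih => exact (hedge _ _ hadj).trans ih
  -- surjectivity up to equality
  have hsurj : ∀ P : J.minimalPrimes, ∃ q : JS.minimalPrimes, c q = P.1 := by
    intro P
    haveI : P.1.IsPrime := P.2.1.1
    obtain ⟨Q, -, hQprime, hQcomap⟩ :=
      Ideal.exists_ideal_over_prime_of_isIntegral P.1 (⊥ : Ideal (AdjoinRoot f)) (by
        intro x hx
        rw [Ideal.mem_comap, Ideal.mem_bot] at hx
        have : x = 0 := hinj (by rw [hx, map_zero])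
        rw [this]; exact zero_mem _)
    haveI := hQprime
    have hJSQ : JS ≤ Q := Ideal.map_le_iff_le_comap.mpr (hQcomap ▸ P.2.1.2)
    obtain ⟨q, hqmin, hqle⟩ := Ideal.exists_minimalPrimes_le hJSQ
    refine ⟨⟨q, hqmin⟩, ?_⟩
    have h1 : c ⟨q, hqmin⟩ ≤ P.1 := by
      refine le_trans (hc2 ⟨q, hqmin⟩) ?_
      rw [← hQcomap]
      exact Ideal.comap_mono hqle
    exact le_antisymm h1 (P.2.2 (hc1 ⟨q, hqmin⟩).1 h1)
  haveI : Nonempty ↥J.minimalPrimes := by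
    obtain ⟨q⟩ := hcon.nonempty
    exact ⟨⟨c q, hc1 q⟩⟩
  refine ⟨?_⟩
  intro P P'
  obtain ⟨q, hq⟩ := hsurj P
  obtain ⟨q', hq'⟩ := hsurj P'
  have := hreach q q' (hcon.preconnected q q')
  have e1 : (⟨c q, hc1 q⟩ : J.minimalPrimes) = P := Subtype.ext hq
  have e2 : (⟨c q', hc1 q'⟩ : J.minimalPrimes) = P' := Subtype.ext hq'
  rwa [e1, e2] at this
end

section
/- Let (R, m) be a complete unramified regular local ring of mixed characteristic and (S, n) its Eisenstein extension S = R[X]/(f(X)). Let p_i and p_j be prime ideals of R such that p_i S and p_j S are prime ideals of S. If rad(p_i S + p_j S) = n, then rad(p_i + p_j) = m. Consequently, if p_i + p_j is not m-primary, then p_i S + p_j S is not n-primary. -/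
open IsLocalRing Polynomial

universe u

/-- For a monic polynomial `f` of positive degree, the contraction of the extension of
any ideal `I` along `R → AdjoinRoot f` is `I` itself. -/
lemma aux_comap_map (R : Type*) [CommRing R] (f : Polynomial R) (hmonic : f.Monic)
    (hdeg : 0 < f.natDegree) (I : Ideal R) :
    Ideal.comap (algebraMap R (AdjoinRoot f)) (I.map (algebraMap R (AdjoinRoot f))) = I := by
  refine le_antisymm ?_ (Ideal.le_comap_map)
  intro x hx
  rw [Ideal.mem_comap] at hx
  rw [AdjoinRoot.algebraMap_eq] at hx
  have h0 : Ideal.Quotient.mk (I.map (AdjoinRoot.of f)) (AdjoinRoot.of f x) = 0 :=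
    Ideal.Quotient.eq_zero_iff_mem.mpr hx
  have h1 := congrArg (AdjoinRoot.quotAdjoinRootEquivQuotPolynomialQuot I f) h0
  rw [show AdjoinRoot.of f x = AdjoinRoot.mk f (C x) from rfl,
    AdjoinRoot.quotAdjoinRootEquivQuotPolynomialQuot_mk_of, map_zero] at h1
  rw [Polynomial.map_C] at h1
  have h2 : (C (Ideal.Quotient.mk I x) : (R ⧸ I)[X]) ∈
      Ideal.span {f.map (Ideal.Quotient.mk I)} :=
    Ideal.Quotient.eq_zero_iff_mem.mp h1
  rw [Ideal.mem_span_singleton] at h2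
  rcases subsingleton_or_nontrivial (R ⧸ I) with hs | hn
  · have : Ideal.Quotient.mk I x = 0 := Subsingleton.elim _ _
    exact Ideal.Quotient.eq_zero_iff_mem.mp this
  · obtain ⟨g, hg⟩ := h2
    have hfm : (f.map (Ideal.Quotient.mk I)).Monic := hmonic.map _
    by_cases hC : (C (Ideal.Quotient.mk I x) : (R ⧸ I)[X]) = 0
    · exact Ideal.Quotient.eq_zero_iff_mem.mp (by simpa using hC)
    · exfalso
      have hgne : g ≠ 0 := by
        rintro rfl; simp [hg] at hC
      have hdeg' : (f.map (Ideal.Quotient.mk I) * g).natDegree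
          = f.natDegree + g.natDegree := by
        rw [hfm.natDegree_mul' hgne, hmonic.natDegree_map]
      have : (C (Ideal.Quotient.mk I x) : (R ⧸ I)[X]).natDegree = 0 := natDegree_C _
      rw [hg, hdeg'] at this
      omega

/-- for primes `pᵢ`, `pⱼ` of `R` whose extensions to the Eisenstein
extension `S = R[X]/(f)` are prime, `rad (pᵢS + pⱼS) = n` implies `rad (pᵢ + pⱼ) = m`;
consequently if `pᵢ + pⱼ` is not `m`-primary then `pᵢS + pⱼS` is not `n`-primary. -/
theorem stmt_9 (R : Type u) [CommRing R] [IsLocalRing R] [IsNoetherianRing R]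
    [IsAdicComplete (maximalIdeal R) R]
    (p : ℕ) (hp : p.Prime) [CharZero R] (hres : CharP (ResidueField R) p)
    (hunram : (p : R) ∉ (maximalIdeal R) ^ 2)
    (hreg : IsRegularLocal R)
    (f : Polynomial R) (hmonic : f.Monic) (hdeg : 0 < f.natDegree)
    (hEis : f.IsEisensteinAt (maximalIdeal R))
    [IsLocalRing (AdjoinRoot f)]
    (Pi Pj : Ideal R) (hPi : Pi.IsPrime) (hPj : Pj.IsPrime)
    (hPiS : (Pi.map (algebraMap R (AdjoinRoot f))).IsPrime)
    (hPjS : (Pj.map (algebraMap R (AdjoinRoot f))).IsPrime) :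
    ((Pi.map (algebraMap R (AdjoinRoot f)) +
          Pj.map (algebraMap R (AdjoinRoot f))).radical = maximalIdeal (AdjoinRoot f) →
        (Pi + Pj).radical = maximalIdeal R) ∧
      ((Pi + Pj).radical ≠ maximalIdeal R →
        (Pi.map (algebraMap R (AdjoinRoot f)) +
            Pj.map (algebraMap R (AdjoinRoot f))).radical ≠
          maximalIdeal (AdjoinRoot f)) := by
  have pb := AdjoinRoot.powerBasis' hmonic
  have hfin : Module.Finite R (AdjoinRoot f) := Module.Finite.of_basis pb.basis
  have hint : Algebra.IsIntegral R (AdjoinRoot f) := Algebra.IsIntegral.of_finite _ _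
  have hcomapn : (maximalIdeal (AdjoinRoot f)).comap (algebraMap R (AdjoinRoot f))
      = maximalIdeal R := by
    have := Ideal.isMaximal_comap_of_isIntegral_of_isMaximal
      (R := R) (S := AdjoinRoot f) (maximalIdeal (AdjoinRoot f))
    exact IsLocalRing.eq_maximalIdeal this
  have hmapsum : Pi.map (algebraMap R (AdjoinRoot f)) + Pj.map (algebraMap R (AdjoinRoot f))
      = (Pi + Pj).map (algebraMap R (AdjoinRoot f)) := by
    rw [Submodule.add_eq_sup, Submodule.add_eq_sup, Ideal.map_sup]
  have main : (Pi.map (algebraMap R (AdjoinRoot f)) +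
      Pj.map (algebraMap R (AdjoinRoot f))).radical = maximalIdeal (AdjoinRoot f) →
      (Pi + Pj).radical = maximalIdeal R := by
    intro h
    have := congrArg (Ideal.comap (algebraMap R (AdjoinRoot f))) h
    rw [hmapsum, Ideal.comap_radical, aux_comap_map R f hmonic hdeg, hcomapn] at this
    exact this
  exact ⟨main, fun hne => mt main hne⟩
end
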